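/- For every integer k ≥ 1, u ∈ ℂ^d, s, n ∈ ℤ^d and nonzero m_1,…,m_k ∈ ℤ^d: (a) T_k(u,s,m_1,m_2,…,m_k) + T_k(u,s,n,m_2,…,m_k) − T_k(u,s,m_1+n,m_2,…,m_k) ∈ I_{k+1}; and (b) T_k(u,s,−m_1,m_2,…,m_k) = −T_k(u,s−m_1,m_1,m_2,…,m_k) in 𝔗. -/
import Mathlib



open Finset in
lemma aux_map_preimage {j : ℕ} (t : Finset (Fin (j+1))) (ht : (0 : Fin (j+1)) ∉ t) :
    (t.preimage Fin.succ (Fin.succ_injective j).injOn).map (Fin.succEmb j) = t := by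
  ext x
  simp only [Finset.mem_map, Finset.mem_preimage, Fin.succEmb, Function.Embedding.coeFn_mk]
  constructor
  · rintro ⟨y, hy, rfl⟩; exact hy
  · intro hx
    rcases Fin.eq_zero_or_eq_succ x with rfl | ⟨y, rfl⟩
    · exact absurd hx ht
    · exact ⟨y, hx, rfl⟩

open Finset in
lemma sum_finset_fin_succ {j : ℕ} {L : Type*} [AddCommMonoid L] (f : Finset (Fin (j+1)) → L) :
    ∑ S : Finset (Fin (j+1)), f S
      = ∑ S : Finset (Fin j), f (S.map (Fin.succEmb j))
        + ∑ S : Finset (Fin j), f (insert 0 (S.map (Fin.succEmb j))) := by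
  classical
  rw [← Finset.powerset_univ, Fin.univ_succ, Finset.cons_eq_insert,
    Finset.sum_powerset_insert (by simp)]
  have key : ∀ g : Finset (Fin (j+1)) → L,
      ∑ t ∈ ((univ : Finset (Fin j)).map ⟨Fin.succ, Fin.succ_injective j⟩).powerset, g t
        = ∑ S : Finset (Fin j), g (S.map (Fin.succEmb j)) := by
    intro g
    rw [← Finset.powerset_univ]
    refine Finset.sum_nbij' (fun t => t.preimage Fin.succ (Fin.succ_injective j).injOn)
      (fun S => S.map (Fin.succEmb j)) ?_ ?_ ?_ ?_ ?_
    · intro t ht; simp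
    · intro S hS
      simp only [mem_powerset]
      intro x hx
      simp only [Finset.mem_map] at hx ⊢
      obtain ⟨y, _, rfl⟩ := hx
      exact ⟨y, mem_univ y, rfl⟩
    · intro t ht
      refine aux_map_preimage t ?_
      intro h0
      have := mem_powerset.mp ht h0
      simp only [Finset.mem_map, Function.Embedding.coeFn_mk] at this
      obtain ⟨y, -, hy⟩ := this
      exact Fin.succ_ne_zero y hy
    · intro S hS; ext x; simp [Fin.succEmb]
    · intro t ht
      rw [aux_map_preimage t]
      intro h0
      have := mem_powerset.mp ht h0
      simp only [Finset.mem_map, Function.Embedding.coeFn_mk] at this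
      obtain ⟨y, -, hy⟩ := this
      exact Fin.succ_ne_zero y hy
  rw [key, key]

/-- `T_k(u,r,m₁,…,m_k) = ∑_{S ⊆ {1,…,k}} (−1)^{|S|} T(u, r + ∑_{i∈S} mᵢ)`. -/
noncomputable def Tk {d : ℕ} {L : Type*} [AddCommGroup L] [Module ℂ L]
    (T : (Fin d → ℂ) → (Fin d → ℤ) → L) (k : ℕ)
    (u : Fin d → ℂ) (r : Fin d → ℤ) (m : Fin k → Fin d → ℤ) : L :=
  ∑ S : Finset (Fin k), ((-1 : ℂ) ^ S.card) • T u (r + ∑ i ∈ S, m i)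

/-- `I_k`, the `ℂ`-linear span of all `T_k(u,r,m₁,…,m_k)` with `u ∈ ℂ^d` and
`r, m₁,…,m_k ∈ ℤ^d`. -/
noncomputable def Ik {d : ℕ} {L : Type*} [AddCommGroup L] [Module ℂ L]
    (T : (Fin d → ℂ) → (Fin d → ℤ) → L) (k : ℕ) : Submodule ℂ L :=
  Submodule.span ℂ
    {x : L | ∃ (u : Fin d → ℂ) (r : Fin d → ℤ) (m : Fin k → Fin d → ℤ),
      x = Tk T k u r m}


open Finset in
lemma Tk_cons {d j : ℕ} {L : Type*} [AddCommGroup L] [Module ℂ L]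
    (T : (Fin d → ℂ) → (Fin d → ℤ) → L)
    (u : Fin d → ℂ) (r a : Fin d → ℤ) (m : Fin j → Fin d → ℤ) :
    Tk T (j+1) u r (Fin.cons a m) = Tk T j u r m - Tk T j u (r + a) m := by
  unfold Tk
  rw [sum_finset_fin_succ (fun S => ((-1 : ℂ) ^ S.card) • T u (r + ∑ i ∈ S, Fin.cons a m i))]
  have h0 : ∀ S : Finset (Fin j), (0 : Fin (j+1)) ∉ S.map (Fin.succEmb j) := by
    intro S h
    simp only [Finset.mem_map, Fin.succEmb, Function.Embedding.coeFn_mk] at h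
    obtain ⟨y, -, hy⟩ := h
    exact Fin.succ_ne_zero y hy
  have e1 : ∀ S : Finset (Fin j),
      ((-1 : ℂ) ^ (S.map (Fin.succEmb j)).card) •
          T u (r + ∑ i ∈ S.map (Fin.succEmb j), Fin.cons a m i)
        = ((-1 : ℂ) ^ S.card) • T u (r + ∑ i ∈ S, m i) := by
    intro S
    rw [Finset.card_map, Finset.sum_map]
    simp [Fin.succEmb, Fin.cons_succ]
  have e2 : ∀ S : Finset (Fin j),
      ((-1 : ℂ) ^ (insert 0 (S.map (Fin.succEmb j))).card) •
        T u (r + ∑ i ∈ insert 0 (S.map (Fin.succEmb j)), Fin.cons a m i)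
        = -(((-1 : ℂ) ^ S.card) • T u (r + a + ∑ i ∈ S, m i)) := by
    intro S
    rw [Finset.card_insert_of_notMem (h0 S), Finset.sum_insert (h0 S), Finset.card_map,
      Finset.sum_map, pow_succ]
    simp only [Fin.cons_zero, Fin.succEmb, Function.Embedding.coeFn_mk, Fin.cons_succ]
    rw [mul_neg_one, neg_smul]
    rw [show r + (a + ∑ i ∈ S, m i) = r + a + ∑ i ∈ S, m i from by abel]
  simp only [e1, e2]
  rw [Finset.sum_neg_distrib, sub_eq_add_neg]

lemma update_eq_cons {d k : ℕ} (m : Fin (k+1) → Fin d → ℤ) (x : Fin d → ℤ) :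
    Function.update m 0 x = Fin.cons x (Fin.tail m) := by
  ext i
  refine Fin.cases ?_ (fun j => ?_) i
  · simp
  · simp [Function.update, Fin.succ_ne_zero, Fin.tail]

/-- For `k ≥ 1`, `u ∈ ℂ^d`, `s, n ∈ ℤ^d` and nonzero `m₁,…,m_k ∈ ℤ^d`:
(a) `T_k(u,s,m₁,m₂,…,m_k) + T_k(u,s,n,m₂,…,m_k) − T_k(u,s,m₁+n,m₂,…,m_k) ∈ I_{k+1}`;
(b) `T_k(u,s,−m₁,m₂,…,m_k) = −T_k(u,s−m₁,m₁,m₂,…,m_k)`.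
(Here `k ≥ 1` is encoded as `k + 1` for a natural number `k`, and `m₁ = m 0`.) -/
theorem Tk_additivity_and_inversion (d : ℕ) (hd : 2 ≤ d)
    (L : Type*) [LieRing L] [LieAlgebra ℂ L]
    (T : (Fin d → ℂ) → (Fin d → ℤ) → L)
    (hlin : ∀ r : Fin d → ℤ, IsLinearMap ℂ (fun u => T u r))
    (hzero : ∀ u : Fin d → ℂ, T u 0 = 0)
    (hind : LinearIndependent ℂ
      (fun p : Fin d × {r : Fin d → ℤ // r ≠ 0} => T (Pi.single p.1 1) p.2.1))
    (hspan : Submodule.span ℂ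
      (Set.range fun p : Fin d × {r : Fin d → ℤ // r ≠ 0} =>
        T (Pi.single p.1 1) p.2.1) = ⊤)
    (hbr : ∀ (u v : Fin d → ℂ) (r s : Fin d → ℤ),
      ⁅T v s, T u r⁆
        = (∑ i, u i * (s i : ℂ)) • T v s - (∑ i, v i * (r i : ℂ)) • T u r
          + T ((∑ i, v i * (r i : ℂ)) • u - (∑ i, u i * (s i : ℂ)) • v) (r + s))
    (k : ℕ) (u : Fin d → ℂ) (s n : Fin d → ℤ)
    (m : Fin (k + 1) → Fin d → ℤ) (hm : ∀ i, m i ≠ 0) :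
    (Tk T (k + 1) u s m + Tk T (k + 1) u s (Function.update m 0 n)
        - Tk T (k + 1) u s (Function.update m 0 (m 0 + n)) ∈ Ik T (k + 2)) ∧
    Tk T (k + 1) u s (Function.update m 0 (-(m 0)))
        = -Tk T (k + 1) u (s - m 0) m := by
  have hmc : ∀ r : Fin d → ℤ,
      Tk T (k+1) u r m = Tk T k u r (Fin.tail m) - Tk T k u (r + m 0) (Fin.tail m) := by
    intro r
    conv_lhs => rw [← Fin.cons_self_tail m]
    exact Tk_cons T u r (m 0) (Fin.tail m)
  constructor
  · have key : Tk T (k + 1) u s m + Tk T (k + 1) u s (Function.update m 0 n)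
        - Tk T (k + 1) u s (Function.update m 0 (m 0 + n))
        = Tk T (k + 2) u s (Fin.cons n m) := by
      rw [update_eq_cons m n, update_eq_cons m (m 0 + n), Tk_cons, Tk_cons,
        Tk_cons T u s n m, hmc s, hmc (s + n), add_right_comm s n (m 0)]
      abel
    rw [key]
    exact Submodule.subset_span ⟨u, s, Fin.cons n m, rfl⟩
  · rw [update_eq_cons m (-(m 0)), Tk_cons, hmc (s - m 0), sub_add_cancel,
      ← sub_eq_add_neg]
    abel
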